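/- Let M, K be n×n Hermitian positive definite complex matrices. If the matrix equation (M⁻¹ + K)⁻¹ = (E⁻¹ + K)⁻¹ + λI holds for Hermitian positive definite E and nonzero real λ, then (E⁻¹ − M⁻¹)/λ is positive definite; in particular M ≻ E if λ > 0 and M ≺ E if λ < 0. -/

import Mathlib

open Matrix
open scoped ComplexOrder
lemma congrPD {n : ℕ} {A N : Matrix (Fin n) (Fin n) ℂ} (hA : A.PosDef)
    (hN : IsUnit N.det) : (Nᴴ * A * N).PosDef := by
  refine Matrix.PosDef.of_dotProduct_mulVec_pos ?_ (fun x hx => ?_)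
  · have h1 := hA.1
    unfold Matrix.IsHermitian at *
    simp [Matrix.conjTranspose_mul, h1, Matrix.mul_assoc]
  · have hNx : N *ᵥ x ≠ 0 := by
      intro h
      apply hx
      have := congrArg (fun v => N⁻¹ *ᵥ v) h
      simpa [Matrix.mulVec_mulVec, Matrix.nonsing_inv_mul _ hN] using this
    have := hA.dotProduct_mulVec_pos hNx
    convert this using 1
    rw [← Matrix.mulVec_mulVec, ← Matrix.mulVec_mulVec, Matrix.star_mulVec,
      Matrix.dotProduct_mulVec]

lemma smulPD {n : ℕ} {A : Matrix (Fin n) (Fin n) ℂ} (hA : A.PosDef) {c : ℝ}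
    (hc : 0 < c) : ((c : ℂ) • A).PosDef := by
  refine Matrix.PosDef.of_dotProduct_mulVec_pos ?_ (fun x hx => ?_)
  · have h1 := hA.1
    unfold Matrix.IsHermitian at *
    simp [h1, Complex.conj_ofReal]
  · have := hA.dotProduct_mulVec_pos hx
    rw [Matrix.smul_mulVec, dotProduct_smul]
    have hc' : (0:ℂ) < (c:ℂ) := by exact_mod_cast hc
    simpa [smul_eq_mul] using mul_pos hc' this

lemma invAntitone {n : ℕ} {A B : Matrix (Fin n) (Fin n) ℂ} (hA : A.PosDef)
    (hB : B.PosDef) (hd : (A - B).PosDef) : (B⁻¹ - A⁻¹).PosDef := by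
  have hAd : IsUnit A.det := hA.isUnit.map (Matrix.detMonoidHom)
  have hBd : IsUnit B.det := hB.isUnit.map (Matrix.detMonoidHom)
  set D := A - B with hD
  have hA' : A = B + D := by rw [hD]; abel
  have h1 : D + D * B⁻¹ * D = D * B⁻¹ * A := by
    conv_rhs => rw [hA']
    rw [Matrix.mul_add, Matrix.mul_assoc D B⁻¹ B, Matrix.nonsing_inv_mul _ hBd,
      Matrix.mul_one]
  have key : B⁻¹ - A⁻¹ = (A⁻¹)ᴴ * (D + D * B⁻¹ * D) * A⁻¹ := by
    rw [hA.inv.1, h1]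
    refine Eq.symm ?_
    calc A⁻¹ * (D * B⁻¹ * A) * A⁻¹
        = A⁻¹ * D * B⁻¹ * (A * A⁻¹) := by simp only [Matrix.mul_assoc]
      _ = A⁻¹ * D * B⁻¹ := by rw [Matrix.mul_nonsing_inv _ hAd, Matrix.mul_one]
      _ = A⁻¹ * A * B⁻¹ - A⁻¹ * B * B⁻¹ := by
          rw [hD, Matrix.mul_sub, Matrix.sub_mul]
      _ = B⁻¹ - A⁻¹ := by
          rw [Matrix.nonsing_inv_mul _ hAd, Matrix.one_mul, Matrix.mul_assoc,
            Matrix.mul_nonsing_inv _ hBd, Matrix.mul_one]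
  rw [key]
  have hDd : IsUnit D.det := hd.isUnit.map (Matrix.detMonoidHom)
  have hsum : (D + D * B⁻¹ * D).PosDef := by
    have h2 : (Dᴴ * B⁻¹ * D).PosDef := congrPD hB.inv hDd
    rw [hd.1] at h2
    exact hd.add h2
  exact congrPD hsum (hA.inv.isUnit.map (Matrix.detMonoidHom))

/-- Let M, K be n×n Hermitian positive definite complex matrices. If
(M⁻¹ + K)⁻¹ = (E⁻¹ + K)⁻¹ + λI holds for Hermitian positive definite E and nonzero
real λ, then (E⁻¹ − M⁻¹)/λ is positive definite; in particular M ≻ E if λ > 0 and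
M ≺ E if λ < 0. -/
theorem stmt_2 {n : ℕ} (M E K : Matrix (Fin n) (Fin n) ℂ) (l : ℝ)
    (hM : M.PosDef) (hE : E.PosDef) (hK : K.PosDef) (hl : l ≠ 0)
    (heq : (M⁻¹ + K)⁻¹ = (E⁻¹ + K)⁻¹ + (l : ℂ) • (1 : Matrix (Fin n) (Fin n) ℂ)) :
    (((l : ℂ)⁻¹) • (E⁻¹ - M⁻¹)).PosDef ∧
      (0 < l → (M - E).PosDef) ∧ (l < 0 → (E - M).PosDef) := by
  set A : Matrix (Fin n) (Fin n) ℂ := M⁻¹ + K with hAdef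
  set B : Matrix (Fin n) (Fin n) ℂ := E⁻¹ + K with hBdef
  have hA : A.PosDef := hM.inv.add hK
  have hB : B.PosDef := hE.inv.add hK
  have hdiff : A⁻¹ - B⁻¹ = (l : ℂ) • 1 := by rw [heq]; abel
  have hEM : E⁻¹ - M⁻¹ = B - A := by rw [hAdef, hBdef]; abel
  rcases hl.lt_or_gt with hneg | hpos
  · -- l < 0
    have hone : (B⁻¹ - A⁻¹) = (((-l : ℝ)) : ℂ) • 1 := by
      rw [← neg_sub, hdiff]; push_cast; rw [neg_smul]
    have hBA : (B⁻¹ - A⁻¹).PosDef := by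
      rw [hone]; exact smulPD Matrix.PosDef.one (by linarith)
    have hAB : (A - B).PosDef := by
      have := invAntitone hB.inv hA.inv hBA
      rwa [Matrix.nonsing_inv_nonsing_inv _ (hA.isUnit.map Matrix.detMonoidHom),
        Matrix.nonsing_inv_nonsing_inv _ (hB.isUnit.map Matrix.detMonoidHom)] at this
    have hX : ((l : ℂ)⁻¹ • (E⁻¹ - M⁻¹)).PosDef := by
      have h1 : (l : ℂ)⁻¹ • (E⁻¹ - M⁻¹) = (((-l)⁻¹ : ℝ) : ℂ) • (A - B) := by
        rw [hEM, show (((-l)⁻¹ : ℝ) : ℂ) = -((l : ℂ)⁻¹) by push_cast; ring,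
          neg_smul, ← smul_neg, neg_sub]
      rw [h1]
      exact smulPD hAB (inv_pos.mpr (by linarith))
    refine ⟨hX, fun h => absurd h (by linarith), fun _ => ?_⟩
    have hME : (M⁻¹ - E⁻¹).PosDef := by
      have : M⁻¹ - E⁻¹ = A - B := by rw [hAdef, hBdef]; abel
      rw [this]; exact hAB
    have := invAntitone hM.inv hE.inv hME
    rwa [Matrix.nonsing_inv_nonsing_inv _ (hM.isUnit.map Matrix.detMonoidHom),
      Matrix.nonsing_inv_nonsing_inv _ (hE.isUnit.map Matrix.detMonoidHom)] at this
  · -- 0 < l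
    have hAB : (A⁻¹ - B⁻¹).PosDef := by
      rw [hdiff]; exact smulPD Matrix.PosDef.one hpos
    have hBA : (B - A).PosDef := by
      have := invAntitone hA.inv hB.inv hAB
      rwa [Matrix.nonsing_inv_nonsing_inv _ (hB.isUnit.map Matrix.detMonoidHom),
        Matrix.nonsing_inv_nonsing_inv _ (hA.isUnit.map Matrix.detMonoidHom)] at this
    have hX : ((l : ℂ)⁻¹ • (E⁻¹ - M⁻¹)).PosDef := by
      have h1 : (l : ℂ)⁻¹ • (E⁻¹ - M⁻¹) = (((l⁻¹ : ℝ)) : ℂ) • (B - A) := by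
        rw [hEM]; push_cast; ring_nf
      rw [h1]
      exact smulPD hBA (by positivity)
    refine ⟨hX, fun _ => ?_, fun h => absurd h (by linarith)⟩
    have hEMp : (E⁻¹ - M⁻¹).PosDef := by rw [hEM]; exact hBA
    have := invAntitone hE.inv hM.inv hEMp
    rwa [Matrix.nonsing_inv_nonsing_inv _ (hE.isUnit.map Matrix.detMonoidHom),
      Matrix.nonsing_inv_nonsing_inv _ (hM.isUnit.map Matrix.detMonoidHom)] at this
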